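/- For every n ≥ 2, the number of permutations π in S_n such that π avoids both the pattern 213 and the pattern 312 and π² avoids the consecutive pattern 213 equals 2^{n−2} + n − 1. -/

import Mathlib

/-- `π` contains the (classical) pattern `σ`: there is a strictly increasing
sequence of positions on which `π` is order isomorphic to `σ`. -/
def ContainsPat {n k : ℕ} (π : Equiv.Perm (Fin n)) (σ : Equiv.Perm (Fin k)) : Prop :=
  ∃ f : Fin k → Fin n, StrictMono f ∧ ∀ a b : Fin k, σ a < σ b ↔ π (f a) < π (f b)

/-- `π` avoids the pattern `σ`. -/
def AvoidsPat {n k : ℕ} (π : Equiv.Perm (Fin n)) (σ : Equiv.Perm (Fin k)) : Prop :=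
  ¬ ContainsPat π σ

/-- `π` contains the consecutive pattern `σ`: some `k` consecutive positions of `π`
carry values order isomorphic to `σ`. -/
def ContainsConsecPat {n k : ℕ} (π : Equiv.Perm (Fin n)) (σ : Equiv.Perm (Fin k)) : Prop :=
  ∃ (i : ℕ) (h : i + k ≤ n), ∀ a b : Fin k,
    σ a < σ b ↔ π ⟨i + a.val, by have := a.isLt; omega⟩ < π ⟨i + b.val, by have := b.isLt; omega⟩

/-- `π` avoids the consecutive pattern `σ`. -/
def AvoidsConsecPat {n k : ℕ} (π : Equiv.Perm (Fin n)) (σ : Equiv.Perm (Fin k)) : Prop :=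
  ¬ ContainsConsecPat π σ

/-- the pattern 231 (0-indexed: 0 ↦ 1, 1 ↦ 2, 2 ↦ 0) -/
def p231 : Equiv.Perm (Fin 3) := c[0, 1, 2]

/-- the pattern 312 (0-indexed: 0 ↦ 2, 1 ↦ 0, 2 ↦ 1) -/
def p312 : Equiv.Perm (Fin 3) := c[0, 2, 1]

/-- the pattern 213 (0-indexed: 0 ↦ 1, 1 ↦ 0, 2 ↦ 2) -/
def p213 : Equiv.Perm (Fin 3) := c[0, 1]

/-- the pattern 1432 (0-indexed: 0 ↦ 0, 1 ↦ 3, 2 ↦ 2, 3 ↦ 1) -/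
def p1432 : Equiv.Perm (Fin 4) := c[1, 3]

/-- direct sum of two permutations -/
def dsum {k m : ℕ} (σ : Equiv.Perm (Fin k)) (τ : Equiv.Perm (Fin m)) :
    Equiv.Perm (Fin (k + m)) :=
  finSumFinEquiv.symm.trans ((Equiv.sumCongr σ τ).trans finSumFinEquiv)

/-- the Lucas numbers: L₁ = 1, L₂ = 3, L_m = L_{m-1} + L_{m-2} -/
def lucas : ℕ → ℕ
  | 0 => 2
  | 1 => 1
  | n + 2 => lucas (n + 1) + lucas n

namespace Stmt1Aux
open Finset
variable {n : ℕ}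


/-- no valley -/
def LC (π : Equiv.Perm (Fin n)) : Prop :=
  ∀ i j k : Fin n, i < j → j < k → π j < π i → π k < π j

lemma avoids_iff_LC (π : Equiv.Perm (Fin n)) :
    (AvoidsPat π p213 ∧ AvoidsPat π p312) ↔ LC π := by
  constructor
  · rintro ⟨h1, h2⟩ i j k hij hjk hji
    by_contra hkj
    have hjk' : π j < π k := by
      rcases lt_or_eq_of_le (not_lt.mp hkj) with h | h
      · exact h
      · exact absurd (π.injective h.symm) (fun hh => by rw [hh] at hjk; exact lt_irrefl _ hjk)
    have hmono : StrictMono ![i, j, k] := by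
      intro a b hab
      fin_cases a <;> fin_cases b <;> simp_all <;> first | exact hij.trans hjk | omega
    have vji : (π j).val < (π i).val := hji
    have vjk : (π j).val < (π k).val := hjk'
    rcases lt_trichotomy (π i) (π k) with hik | hik | hik
    · refine h1 ⟨![i, j, k], hmono, ?_⟩
      have vik : (π i).val < (π k).val := hik
      intro a b
      fin_cases a <;> fin_cases b <;>
        simp only [show ((⟨0,by omega⟩ : Fin 3)) = 0 from rfl,
          show ((⟨1,by omega⟩ : Fin 3)) = 1 from rfl, show ((⟨2,by omega⟩ : Fin 3)) = 2 from rfl,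
          Matrix.cons_val_zero, Matrix.cons_val_one, Matrix.head_cons] <;>
        (try rw [show ((![i,j,k] : Fin 3 → Fin n) 2) = k from rfl]) <;>
        (constructor <;> intro hh) <;>
        first
          | decide
          | exact absurd hh (by decide)
          | (rw [Fin.lt_def]; omega)
          | (rw [Fin.lt_def] at hh; omega)
    · exact absurd (π.injective hik) (fun hh => by
        rw [hh] at hij; exact lt_irrefl _ (hij.trans hjk))
    · refine h2 ⟨![i, j, k], hmono, ?_⟩
      have vki : (π k).val < (π i).val := hik
      intro a b
      fin_cases a <;> fin_cases b <;>
        simp only [show ((⟨0,by omega⟩ : Fin 3)) = 0 from rfl,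
          show ((⟨1,by omega⟩ : Fin 3)) = 1 from rfl, show ((⟨2,by omega⟩ : Fin 3)) = 2 from rfl,
          Matrix.cons_val_zero, Matrix.cons_val_one, Matrix.head_cons] <;>
        (try rw [show ((![i,j,k] : Fin 3 → Fin n) 2) = k from rfl]) <;>
        (constructor <;> intro hh) <;>
        first
          | decide
          | exact absurd hh (by decide)
          | (rw [Fin.lt_def]; omega)
          | (rw [Fin.lt_def] at hh; omega)
  · intro h
    constructor
    · rintro ⟨f, hf, hiff⟩
      have h10 : π (f 1) < π (f 0) := (hiff 1 0).mp (by decide)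
      have h02 : π (f 0) < π (f 2) := (hiff 0 2).mp (by decide)
      have := h (f 0) (f 1) (f 2) (hf (by decide)) (hf (by decide)) h10
      have a1 : (π (f 2)).val < (π (f 1)).val := this
      have a2 : (π (f 1)).val < (π (f 0)).val := h10
      have a3 : (π (f 0)).val < (π (f 2)).val := h02
      omega
    · rintro ⟨f, hf, hiff⟩
      have h10 : π (f 1) < π (f 0) := (hiff 1 0).mp (by decide)
      have h12 : π (f 1) < π (f 2) := (hiff 1 2).mp (by decide)
      have := h (f 0) (f 1) (f 2) (hf (by decide)) (hf (by decide)) h10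
      have a1 : (π (f 2)).val < (π (f 1)).val := this
      have a2 : (π (f 1)).val < (π (f 2)).val := h12
      omega



lemma consec_iff {n : ℕ} (ρ : Equiv.Perm (Fin n)) :
    ContainsConsecPat ρ p213 ↔ ∃ (i : ℕ) (_ : i + 3 ≤ n),
      (ρ ⟨i+1, by omega⟩).val < (ρ ⟨i, by omega⟩).val ∧
      (ρ ⟨i, by omega⟩).val < (ρ ⟨i+2, by omega⟩).val := by
  constructor
  · rintro ⟨i, h, hiff⟩
    refine ⟨i, h, ?_, ?_⟩
    · exact (hiff 1 0).mp (by decide)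
    · exact (hiff 0 2).mp (by decide)
  · rintro ⟨i, h, h1, h2⟩
    refine ⟨i, h, ?_⟩
    intro a b
    have e0 : (⟨i + (0 : Fin 3).val, by omega⟩ : Fin n) = ⟨i, by omega⟩ := rfl
    have e1 : (⟨i + (1 : Fin 3).val, by omega⟩ : Fin n) = ⟨i+1, by omega⟩ := rfl
    have e2 : (⟨i + (2 : Fin 3).val, by omega⟩ : Fin n) = ⟨i+2, by omega⟩ := rfl
    fin_cases a <;> fin_cases b <;>
      simp only [show ((⟨0,by omega⟩ : Fin 3)) = 0 from rfl,
        show ((⟨1,by omega⟩ : Fin 3)) = 1 from rfl, show ((⟨2,by omega⟩ : Fin 3)) = 2 from rfl,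
        add_zero, e0, e1, e2] <;>
      (constructor <;> intro hh) <;>
      first
        | decide
        | exact absurd hh (by decide)
        | (rw [Fin.lt_def]; omega)
        | (rw [Fin.lt_def] at hh; omega)



def Mono (π : Equiv.Perm (Fin n)) (m : Fin n) : Prop :=
  ∀ i j : Fin n, i < j → j ≤ m → π i < π j

def Anti (π : Equiv.Perm (Fin n)) (m : Fin n) : Prop :=
  ∀ i j : Fin n, m ≤ i → i < j → π j < π i

def peak (π : Equiv.Perm (Fin n)) (hn : 0 < n) : Fin n := π.symm ⟨n-1, by omega⟩

lemma peak_apply (π : Equiv.Perm (Fin n)) (hn : 0 < n) :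
    π (peak π hn) = ⟨n-1, by omega⟩ := Equiv.apply_symm_apply ..

lemma lt_top {π : Equiv.Perm (Fin n)} {hn : 0 < n} {x : Fin n} (hx : x ≠ peak π hn) :
    (π x).val < n - 1 := by
  have h1 : π x ≠ ⟨n-1, by omega⟩ := by
    intro h; exact hx (by rw [← peak_apply π hn] at h; exact π.injective h)
  have h2 : (π x).val < n := (π x).isLt
  have h3 : (π x).val ≠ n - 1 := fun h => h1 (Fin.ext h)
  omega

lemma lc_iff_peak (π : Equiv.Perm (Fin n)) (hn : 0 < n) :
    LC π ↔ Mono π (peak π hn) ∧ Anti π (peak π hn) := by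
  set m := peak π hn with hm
  have htop : (π m).val = n - 1 := by rw [peak_apply]
  constructor
  · intro h
    constructor
    · intro i j hij hjm
      rcases eq_or_lt_of_le hjm with rfl | hjm'
      · have := lt_top (x := i) (hn := hn) (ne_of_lt hij)
        rw [Fin.lt_def, htop]; omega
      · by_contra hc
        have hne : π i ≠ π j := fun hh => absurd (π.injective hh) (ne_of_lt hij)
        have hji : π j < π i := by
          rcases lt_or_eq_of_le (not_lt.mp hc) with h' | h'
          · exact h'
          · exact absurd h'.symm hne
        have := h i j m hij hjm' hji
        rw [Fin.lt_def, htop] at this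
        have := lt_top (x := j) (hn := hn) (ne_of_lt hjm')
        omega
    · intro i j hmi hij
      rcases eq_or_lt_of_le hmi with rfl | hmi'
      · have := lt_top (x := j) (hn := hn) (ne_of_gt hij)
        rw [Fin.lt_def, htop]; omega
      · by_contra hc
        have hne : π i ≠ π j := fun hh => absurd (π.injective hh) (ne_of_lt hij)
        have hij' : π i < π j := by
          rcases lt_or_eq_of_le (not_lt.mp hc) with h' | h'
          · exact h'
          · exact absurd h' hne
        have him : π i < π m := by
          have := lt_top (x := i) (hn := hn) (ne_of_gt hmi')
          rw [Fin.lt_def, htop]; omega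
        have := h m i j hmi' hij him
        rw [Fin.lt_def] at this hij'
        omega
  · rintro ⟨hM, hA⟩ i j k hij hjk hji
    rcases le_or_gt j m with hjm | hjm
    · exact absurd (hM i j hij hjm) (not_lt.mpr (le_of_lt hji))
    · exact hA j k (le_of_lt hjm) hjk

lemma mono_le_apply {π : Equiv.Perm (Fin n)} {m : Fin n} (hM : Mono π m) :
    ∀ i : Fin n, i ≤ m → i.val ≤ (π i).val := by
  have key : ∀ k : ℕ, ∀ i : Fin n, i.val = k → i ≤ m → i.val ≤ (π i).val := by
    intro k
    induction k with
    | zero => intro i hi _; omega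
    | succ k ih =>
      intro i hi him
      have hk : k < n := by have := i.isLt; omega
      have h1 : (⟨k, hk⟩ : Fin n) < i := by simp [Fin.lt_def]; omega
      have h2 : (⟨k, hk⟩ : Fin n) ≤ m := le_of_lt (lt_of_lt_of_le h1 him)
      have h3 := hM _ i h1 him
      have h4 := ih ⟨k, hk⟩ rfl h2
      rw [Fin.lt_def] at h3
      simp at h4
      omega
  intro i him; exact key i.val i rfl him

lemma mono_id_seg {π : Equiv.Perm (Fin n)} {m : Fin n} (hM : Mono π m) {a : ℕ} (ha : a < n)
    (ham : a ≤ m.val) (hfix : (π ⟨a, ha⟩).val = a) :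
    ∀ b (hb : b < n), b ≤ a → (π ⟨b, hb⟩).val = b := by
  have key : ∀ d, d ≤ a → (π ⟨a - d, by omega⟩).val = a - d := by
    intro d
    induction d with
    | zero => intro _; simpa using hfix
    | succ d ih =>
      intro hd
      have ih' := ih (by omega)
      have h1 : (⟨a - (d+1), by omega⟩ : Fin n) < (⟨a - d, by omega⟩ : Fin n) := by
        rw [Fin.lt_def]; simp; omega
      have h2 : (⟨a - d, by omega⟩ : Fin n) ≤ m := by rw [Fin.le_def]; simp; omega
      have h3 := hM _ _ h1 h2
      have h4 := mono_le_apply hM ⟨a - (d+1), by omega⟩ (le_of_lt (lt_of_lt_of_le h1 h2))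
      rw [Fin.lt_def, ih'] at h3
      simp at h4
      omega
  intro b hbn hb
  have h := key (a - b) (by omega)
  have e : (⟨a - (a - b), by omega⟩ : Fin n) = ⟨b, hbn⟩ := Fin.ext (by simp; omega)
  rw [e] at h
  omega



lemma step1 {π : Equiv.Perm (Fin n)} (hn0 : 0 < n) (hLC : LC π) {i : ℕ}
    (h0 : i < n) (h1 : i+1 < n) (h2 : i+2 < n)
    (A : π (π ⟨i+1, h1⟩) < π (π ⟨i, h0⟩))
    (B : π (π ⟨i, h0⟩) < π (π ⟨i+2, h2⟩)) :
    i + 1 = (peak π hn0).val := by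
  obtain ⟨hM, hA⟩ := (lc_iff_peak π hn0).mp hLC
  set m := peak π hn0 with hm
  set I0 : Fin n := ⟨i, h0⟩ with hI0
  set I1 : Fin n := ⟨i+1, h1⟩ with hI1
  set I2 : Fin n := ⟨i+2, h2⟩ with hI2
  have hI01 : I0 < I1 := by rw [Fin.lt_def]; simp [hI0, hI1]
  have hI12 : I1 < I2 := by rw [Fin.lt_def]; simp [hI1, hI2]
  have noval : ∀ p q r : Fin n, p < q → q < r → π q < π p → π q < π r → False :=
    fun p q r h1 h2 h3 h4 => absurd (hLC p q r h1 h2 h3) (not_lt.mpr (le_of_lt h4))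
  set a := π I0 with ha
  set b := π I1 with hb
  set c := π I2 with hc
  have hab : a ≠ b := fun h => by
    have := π.injective h
    rw [hI0, hI1, Fin.mk.injEq] at this; omega
  have hbc : b ≠ c := fun h => by
    have := π.injective h
    rw [hI1, hI2, Fin.mk.injEq] at this; omega
  by_cases hx : b < a <;> by_cases hy : b < c
  · exact absurd (noval I0 I1 I2 hI01 hI12 hx hy) id
  · have hy' : c < b := lt_of_le_of_ne (not_lt.mp hy) (fun h => hbc h.symm)
    exact absurd (noval c b a hy' hx (A.trans B) A) id
  · have hx' : a < b := lt_of_le_of_ne (not_lt.mp hx) hab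
    exact absurd (noval a b c hx' hy A (A.trans B)) id
  · have hx' : a < b := lt_of_le_of_ne (not_lt.mp hx) hab
    have hy' : c < b := lt_of_le_of_ne (not_lt.mp hy) (fun h => hbc h.symm)
    rcases lt_trichotomy I1 m with hlt | heq | hgt
    · have hI2m : I2 ≤ m := by
        rw [Fin.le_def]; rw [Fin.lt_def] at hlt; simp [hI1, hI2] at *; omega
      exact absurd (hM I1 I2 hI12 hI2m) (not_lt.mpr (le_of_lt hy'))
    · rw [← heq]
    · have hmI0 : m ≤ I0 := by
        rw [Fin.le_def]; rw [Fin.lt_def] at hgt; simp [hI1, hI0] at *; omega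
      exact absurd (hA I0 I1 hmI0 hI01) (not_lt.mpr (le_of_lt hx'))



def Shape (π : Equiv.Perm (Fin n)) (hn0 : 0 < n) : Prop :=
  n - 2 ≤ (peak π hn0).val ∨
  ∃ h : (peak π hn0).val + 1 < n, π ⟨(peak π hn0).val + 1, h⟩ = ⟨n-2, by omega⟩

lemma no_occ_of_shape {π : Equiv.Perm (Fin n)} (hn0 : 0 < n) (hLC : LC π) (hS : Shape π hn0)
    {i : ℕ} (h3 : i + 3 ≤ n) (h0 : i < n) (h1 : i+1 < n) (h2 : i+2 < n)
    (A : π (π ⟨i+1, h1⟩) < π (π ⟨i, h0⟩))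
    (B : π (π ⟨i, h0⟩) < π (π ⟨i+2, h2⟩)) : False := by
  obtain ⟨hM, hA⟩ := (lc_iff_peak π hn0).mp hLC
  have hm1 := step1 hn0 hLC h0 h1 h2 A B
  have hn1 : n - 1 < n := by omega
  have hn2 : n - 2 < n := by omega
  have hiI1 : (⟨i+1, h1⟩ : Fin n) = peak π hn0 := Fin.ext hm1
  have hbtop : π ⟨i+1, h1⟩ = (⟨n-1, hn1⟩ : Fin n) := by rw [hiI1]; exact peak_apply π hn0
  rw [hbtop] at A
  have hiv : i + 1 = (peak π hn0).val := hm1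
  by_cases hm2 : (peak π hn0).val = n - 2
  · -- peak at position n-2
    have hieq : i = n - 3 := by omega
    have e2 : (⟨i+2, h2⟩ : Fin n) = (⟨n-1, hn1⟩ : Fin n) := Fin.ext (by simp; omega)
    rw [e2] at B
    by_cases hjv : (π (⟨n-1, hn1⟩ : Fin n)).val = n - 2
    · have hjm : π (⟨n-1, hn1⟩ : Fin n) = peak π hn0 := Fin.ext (by omega)
      have hBv : (π (π ⟨i, h0⟩)).val < n - 1 := by
        have hB' := B
        rw [hjm, peak_apply π hn0] at hB'
        exact hB'
      have hAv : (π (⟨n-1,hn1⟩ : Fin n)).val < (π (π ⟨i, h0⟩)).val := A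
      omega
    · have hjtop : (π (⟨n-1,hn1⟩:Fin n)).val ≠ n-1 := by
        intro h
        have he : π (⟨n-1,hn1⟩:Fin n) = π (peak π hn0) := by
          rw [peak_apply]; exact Fin.ext h
        have hv := congrArg Fin.val (π.injective he)
        simp at hv; omega
      have hp : π (π.symm ⟨n-2,hn2⟩) = (⟨n-2,hn2⟩ : Fin n) := π.apply_symm_apply _
      have hpm : (π.symm ⟨n-2,hn2⟩).val ≠ (peak π hn0).val := by
        intro h
        have he : π.symm ⟨n-2,hn2⟩ = peak π hn0 := Fin.ext h
        rw [he, peak_apply] at hp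
        have := congrArg Fin.val hp; simp at this; omega
      have hplast : (π.symm ⟨n-2,hn2⟩).val ≠ n-1 := by
        intro h
        have he : π.symm ⟨n-2,hn2⟩ = (⟨n-1,hn1⟩ : Fin n) := Fin.ext h
        rw [he] at hp
        have := congrArg Fin.val hp; simp at this; omega
      have hpval : (π.symm ⟨n-2,hn2⟩).val ≤ n-3 := by
        have := (π.symm ⟨n-2,hn2⟩).isLt; omega
      have hpi : (π.symm ⟨n-2,hn2⟩).val = i := by
        by_contra hne
        have hplt : π.symm ⟨n-2,hn2⟩ < (⟨i,h0⟩ : Fin n) := by rw [Fin.lt_def]; simp; omega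
        have hmono := hM _ _ hplt (by rw [Fin.le_def]; simp; omega : (⟨i,h0⟩:Fin n) ≤ peak π hn0)
        rw [hp] at hmono
        have hv : n - 2 < (π ⟨i,h0⟩).val := hmono
        have hv2 : (π ⟨i,h0⟩).val = n-1 := by have := (π ⟨i,h0⟩).isLt; omega
        have he : (⟨i,h0⟩ : Fin n) = peak π hn0 :=
          π.injective (by rw [peak_apply]; exact Fin.ext hv2)
        have := congrArg Fin.val he; simp at this; omega
      have ha2 : π ⟨i,h0⟩ = (⟨n-2,hn2⟩ : Fin n) := by
        rw [← hp]; congr 1; exact (Fin.ext hpi).symm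
      rw [ha2] at B
      have hmm : π (⟨n-2,hn2⟩ : Fin n) = π (peak π hn0) := by congr 1; exact Fin.ext (by simp; omega)
      rw [hmm, peak_apply] at B
      have hBv : n - 1 < (π (π (⟨n-1,hn1⟩ : Fin n))).val := B
      have := (π (π (⟨n-1,hn1⟩:Fin n))).isLt
      omega
  · -- peak at position ≤ n-3
    have hmle : (peak π hn0).val ≤ n - 3 := by omega
    rcases hS with hS | ⟨hlt, hsh⟩
    · omega
    · have e2 : (⟨i+2, h2⟩ : Fin n) = (⟨(peak π hn0).val + 1, hlt⟩ : Fin n) := Fin.ext (by simp; omega)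
      have hc : π ⟨i+2,h2⟩ = (⟨n-2, hn2⟩ : Fin n) := by rw [e2]; exact hsh
      rw [hc] at B
      have hatop : (π ⟨i,h0⟩).val ≠ n-1 := by
        intro h
        have he : (⟨i,h0⟩ : Fin n) = peak π hn0 :=
          π.injective (by rw [peak_apply]; exact Fin.ext h)
        have := congrArg Fin.val he; simp at this; omega
      have hanm2 : (π ⟨i,h0⟩).val ≠ n-2 := by
        intro h
        have he : π ⟨i,h0⟩ = π ⟨i+2,h2⟩ := by rw [hc]; exact Fin.ext h
        have := congrArg Fin.val (π.injective he)
        simp at this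
      have hale : (π ⟨i,h0⟩).val ≤ n-3 := by have := (π ⟨i,h0⟩).isLt; omega
      rcases lt_trichotomy ((π ⟨i,h0⟩).val) ((peak π hn0).val) with hu | hu | hu
      · have hge := mono_le_apply hM ⟨i,h0⟩ (by rw [Fin.le_def]; simp; omega)
        simp at hge
        have hfix : (π ⟨i,h0⟩).val = i := by omega
        have hid := mono_id_seg hM h0 (by omega) hfix
        have hpa : π (π ⟨i,h0⟩) = π ⟨i,h0⟩ := by congr 1; exact Fin.ext hfix
        rw [hpa] at A
        have hAv : (π (⟨n-1,hn1⟩:Fin n)).val < i := by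
          have hv : (π (⟨n-1,hn1⟩:Fin n)).val < (π ⟨i,h0⟩).val := A
          omega
        have hidt := hid ((π (⟨n-1,hn1⟩:Fin n)).val) ((π (⟨n-1,hn1⟩:Fin n)).isLt) (by omega)
        have he : (⟨(π (⟨n-1,hn1⟩:Fin n)).val, (π (⟨n-1,hn1⟩:Fin n)).isLt⟩ : Fin n)
            = (⟨n-1,hn1⟩ : Fin n) := π.injective (Fin.ext hidt)
        have := congrArg Fin.val he; simp at this; omega
      · have he : π ⟨i,h0⟩ = peak π hn0 := Fin.ext hu
        rw [he, peak_apply] at B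
        have hBv : n-1 < (π (⟨n-2,hn2⟩:Fin n)).val := B
        have := (π (⟨n-2,hn2⟩:Fin n)).isLt; omega
      · have hanti := hA (π ⟨i,h0⟩) ⟨n-2,hn2⟩ (by rw [Fin.le_def]; omega)
          (by rw [Fin.lt_def]; simp; omega)
        exact absurd hanti (not_lt.mpr (le_of_lt B))



lemma occ_of_not_shape {π : Equiv.Perm (Fin n)} (hn0 : 0 < n) (hLC : LC π)
    (hnS : ¬ Shape π hn0) : ContainsConsecPat (π^2) p213 := by
  obtain ⟨hM, hA⟩ := (lc_iff_peak π hn0).mp hLC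
  have pow2 : ∀ x : Fin n, (π^2) x = π (π x) := fun x => by
    rw [sq]; exact Equiv.Perm.mul_apply π π x
  rw [Shape, not_or] at hnS
  obtain ⟨hS1, hS2⟩ := hnS
  push_neg at hS1
  -- hS1 : (peak π hn0).val < n - 2
  have hn3 : 3 ≤ n := by have := (peak π hn0).val.zero_le; omega
  have hn1 : n - 1 < n := by omega
  have hn2 : n - 2 < n := by omega
  have hlt : (peak π hn0).val + 1 < n := by omega
  push_neg at hS2
  have hq := hS2 hlt
  -- position of value n-2 is peak-1
  have hp : π (π.symm ⟨n-2,hn2⟩) = (⟨n-2,hn2⟩ : Fin n) := π.apply_symm_apply _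
  have hpm : (π.symm ⟨n-2,hn2⟩).val ≠ (peak π hn0).val := by
    intro h
    have he : π.symm ⟨n-2,hn2⟩ = peak π hn0 := Fin.ext h
    rw [he, peak_apply] at hp
    have := congrArg Fin.val hp; simp at this; omega
  have hpm1 : (π.symm ⟨n-2,hn2⟩).val ≠ (peak π hn0).val + 1 := by
    intro h
    have he : π.symm ⟨n-2,hn2⟩ = (⟨(peak π hn0).val + 1, hlt⟩ : Fin n) := Fin.ext h
    rw [he] at hp
    exact hq hp
  have hpgt : ¬ ((peak π hn0).val + 1 < (π.symm ⟨n-2,hn2⟩).val) := by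
    intro h
    have hanti := hA (⟨(peak π hn0).val + 1, hlt⟩ : Fin n) (π.symm ⟨n-2,hn2⟩)
      (by rw [Fin.le_def]; simp) (by rw [Fin.lt_def]; simpa)
    rw [hp] at hanti
    have hv : n - 2 < (π ⟨(peak π hn0).val + 1, hlt⟩).val := hanti
    have hv2 : (π ⟨(peak π hn0).val + 1, hlt⟩).val = n - 1 := by
      have := (π ⟨(peak π hn0).val + 1, hlt⟩).isLt; omega
    have he : (⟨(peak π hn0).val + 1, hlt⟩ : Fin n) = peak π hn0 :=
      π.injective (by rw [peak_apply]; exact Fin.ext hv2)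
    have := congrArg Fin.val he; simp at this
  have hm1 : 1 ≤ (peak π hn0).val := by omega
  have hpi : (π.symm ⟨n-2,hn2⟩).val = (peak π hn0).val - 1 := by
    by_contra hne
    -- then p.val < peak.val - 1 (since not >, ≠, ≠+1)
    have hplt2 : (π.symm ⟨n-2,hn2⟩).val < (peak π hn0).val - 1 := by omega
    have hm1n : (peak π hn0).val - 1 < n := by omega
    have hmono := hM (π.symm ⟨n-2,hn2⟩) (⟨(peak π hn0).val - 1, hm1n⟩ : Fin n)
      (by rw [Fin.lt_def]; simpa) (by rw [Fin.le_def]; exact Nat.sub_le _ _)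
    rw [hp] at hmono
    have hv : n - 2 < (π ⟨(peak π hn0).val - 1, hm1n⟩).val := hmono
    have hv2 : (π ⟨(peak π hn0).val - 1, hm1n⟩).val = n - 1 := by
      have := (π ⟨(peak π hn0).val - 1, hm1n⟩).isLt; omega
    have he : (⟨(peak π hn0).val - 1, hm1n⟩ : Fin n) = peak π hn0 :=
      π.injective (by rw [peak_apply]; exact Fin.ext hv2)
    have := congrArg Fin.val he; simp at this; omega
  -- the witness index
  rw [consec_iff]
  have h3 : (peak π hn0).val - 1 + 3 ≤ n := by omega
  refine ⟨(peak π hn0).val - 1, h3, ?_, ?_⟩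
  all_goals rw [pow2, pow2]
  -- common facts
  · -- π(π(m)) < π(π(m-1)) : t0 < t1
    have e1 : (⟨(peak π hn0).val - 1 + 1, by omega⟩ : Fin n) = peak π hn0 := Fin.ext (by simp; omega)
    have e0 : π (⟨(peak π hn0).val - 1, by omega⟩ : Fin n) = (⟨n-2,hn2⟩ : Fin n) := by
      rw [show (⟨(peak π hn0).val - 1, by omega⟩ : Fin n) = π.symm ⟨n-2,hn2⟩ from
        Fin.ext (by simp; omega)]
      exact hp
    rw [e1, peak_apply, e0]
    exact hA ⟨n-2,hn2⟩ ⟨n-1,by omega⟩ (by rw [Fin.le_def]; simp; omega)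
      (by rw [Fin.lt_def]; simp; omega)
  · -- t1 < π q
    have e0 : π (⟨(peak π hn0).val - 1, by omega⟩ : Fin n) = (⟨n-2,hn2⟩ : Fin n) := by
      rw [show (⟨(peak π hn0).val - 1, by omega⟩ : Fin n) = π.symm ⟨n-2,hn2⟩ from
        Fin.ext (by simp; omega)]
      exact hp
    have e2 : (⟨(peak π hn0).val - 1 + 2, by omega⟩ : Fin n)
        = (⟨(peak π hn0).val + 1, hlt⟩ : Fin n) := Fin.ext (by simp; omega)
    rw [e0, e2]
    -- goal : π ⟨n-2,hn2⟩ < π (π ⟨peak+1, hlt⟩)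
    have hqtop : (π ⟨(peak π hn0).val + 1, hlt⟩).val ≠ n - 1 := by
      intro h
      have he : (⟨(peak π hn0).val + 1, hlt⟩ : Fin n) = peak π hn0 :=
        π.injective (by rw [peak_apply]; exact Fin.ext h)
      have := congrArg Fin.val he; simp at this
    have hqn2 : (π ⟨(peak π hn0).val + 1, hlt⟩).val ≠ n - 2 := by
      intro h
      exact hq (Fin.ext h)
    have hqle : (π ⟨(peak π hn0).val + 1, hlt⟩).val ≤ n - 3 := by
      have := (π ⟨(peak π hn0).val + 1, hlt⟩).isLt; omega
    have ht1top : (π (⟨n-2,hn2⟩ : Fin n)).val ≠ n - 1 := by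
      intro h
      have he : (⟨n-2,hn2⟩ : Fin n) = peak π hn0 :=
        π.injective (by rw [peak_apply]; exact Fin.ext h)
      have := congrArg Fin.val he; simp at this; omega
    rcases lt_trichotomy ((π ⟨(peak π hn0).val + 1, hlt⟩).val) ((peak π hn0).val) with hu | hu | hu
    · -- q < m
      have hqt1 : (π (⟨n-2,hn2⟩:Fin n)).val ≤ (π ⟨(peak π hn0).val + 1, hlt⟩).val := by
        rcases eq_or_lt_of_le (show (peak π hn0).val + 1 ≤ n - 2 by omega) with he | hlt2
        · have : (⟨(peak π hn0).val + 1, hlt⟩ : Fin n) = (⟨n-2,hn2⟩ : Fin n) := Fin.ext (by simpa)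
          rw [this]
        · have := hA (⟨(peak π hn0).val + 1, hlt⟩ : Fin n) (⟨n-2,hn2⟩ : Fin n)
            (by rw [Fin.le_def]; simp) (by rw [Fin.lt_def]; simpa)
          exact le_of_lt this
      have hge := mono_le_apply hM (π ⟨(peak π hn0).val + 1, hlt⟩) (by rw [Fin.le_def]; omega)
      have hne : (π (π ⟨(peak π hn0).val + 1, hlt⟩)).val ≠ (π (⟨n-2,hn2⟩:Fin n)).val := by
        intro h
        have he : π (π ⟨(peak π hn0).val + 1, hlt⟩) = π (⟨n-2,hn2⟩:Fin n) := Fin.ext h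
        have := congrArg Fin.val (π.injective he)
        simp at this; omega
      omega
    · -- q = m
      have he : π ⟨(peak π hn0).val + 1, hlt⟩ = peak π hn0 := Fin.ext hu
      rw [he, peak_apply]
      have := (π (⟨n-2,hn2⟩:Fin n)).isLt
      simp; omega
    · -- q > m
      exact hA (π ⟨(peak π hn0).val + 1, hlt⟩) (⟨n-2,hn2⟩ : Fin n)
        (by rw [Fin.le_def]; omega) (by rw [Fin.lt_def]; simp; omega)


open Finset

lemma compl_card (C : Finset (Fin n)) : Cᶜ.card = n - C.card := by
  rw [Finset.card_compl]; simp

lemma card_le_n (C : Finset (Fin n)) : C.card ≤ n := by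
  have := C.card_le_univ; simpa using this

def uniF (C : Finset (Fin n)) : Fin n → Fin n := fun i =>
  if h : i.val < C.card then C.orderEmbOfFin rfl ⟨i.val, h⟩
  else Cᶜ.orderEmbOfFin (compl_card C) ⟨n - 1 - i.val, by
    have h2 := i.isLt
    have h3 := card_le_n C
    omega⟩

lemma uniF_mem_lt (C : Finset (Fin n)) (i : Fin n) (h : i.val < C.card) : uniF C i ∈ C := by
  rw [uniF, dif_pos h]; exact Finset.orderEmbOfFin_mem _ _ _

lemma uniF_mem_ge (C : Finset (Fin n)) (i : Fin n) (h : ¬ i.val < C.card) : uniF C i ∈ Cᶜ := by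
  rw [uniF, dif_neg h]; exact Finset.orderEmbOfFin_mem _ _ _

lemma uniF_inj (C : Finset (Fin n)) : Function.Injective (uniF C) := by
  intro x y hxy
  by_cases hx : x.val < C.card <;> by_cases hy : y.val < C.card
  · simp only [uniF] at hxy
    rw [dif_pos hx, dif_pos hy] at hxy
    have := (C.orderEmbOfFin rfl).injective hxy
    rw [Fin.mk.injEq] at this
    exact Fin.ext this
  · exact absurd ((Finset.mem_compl.mp (uniF_mem_ge C y hy)))
      (by rw [← hxy] at *; simp [uniF_mem_lt C x hx])
  · exact absurd ((Finset.mem_compl.mp (uniF_mem_ge C x hx)))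
      (by rw [hxy] at *; simp [uniF_mem_lt C y hy])
  · simp only [uniF] at hxy
    rw [dif_neg hx, dif_neg hy] at hxy
    have := (Cᶜ.orderEmbOfFin (compl_card C)).injective hxy
    rw [Fin.mk.injEq] at this
    have hx2 := x.isLt
    have hy2 := y.isLt
    exact Fin.ext (by omega)

noncomputable def uni (C : Finset (Fin n)) : Equiv.Perm (Fin n) :=
  Equiv.ofBijective (uniF C) (Finite.injective_iff_bijective.mp (uniF_inj C))

lemma uni_apply (C : Finset (Fin n)) (i : Fin n) : uni C i = uniF C i := rfl

lemma uni_apply_lt (C : Finset (Fin n)) (i : Fin n) (h : i.val < C.card) :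
    uni C i = C.orderEmbOfFin rfl ⟨i.val, h⟩ := by
  rw [uni_apply, uniF, dif_pos h]

lemma uni_apply_ge (C : Finset (Fin n)) (i : Fin n) (h : ¬ i.val < C.card)
    (hb : n - 1 - i.val < n - C.card) :
    uni C i = Cᶜ.orderEmbOfFin (compl_card C) ⟨n - 1 - i.val, hb⟩ := by
  rw [uni_apply, uniF, dif_neg h]

lemma card_pos_of_top (C : Finset (Fin n)) (hn0 : 0 < n) (hC : (⟨n-1, by omega⟩ : Fin n) ∈ C) :
    0 < C.card := Finset.card_pos.mpr ⟨_, hC⟩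

lemma uni_peak_apply (C : Finset (Fin n)) (hn0 : 0 < n)
    (hC : (⟨n-1, by omega⟩ : Fin n) ∈ C) :
    uni C ⟨C.card - 1, by have := card_le_n C; have := card_pos_of_top C hn0 hC; omega⟩
      = (⟨n-1, by omega⟩ : Fin n) := by
  have hpos := card_pos_of_top C hn0 hC
  rw [uni_apply_lt C _ (Nat.sub_lt hpos Nat.one_pos)]
  have heq : C.orderEmbOfFin rfl ⟨C.card - 1, by omega⟩ = C.max' (Finset.card_pos.mp hpos) :=
    Finset.orderEmbOfFin_last rfl hpos
  rw [heq]
  apply le_antisymm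
  · rw [Fin.le_def]
    have h1 : (C.max' (Finset.card_pos.mp hpos)).val ≤ n - 1 := by
      have := (C.max' (Finset.card_pos.mp hpos)).isLt; omega
    exact h1
  · exact Finset.le_max' C _ hC

lemma uni_peak (C : Finset (Fin n)) (hn0 : 0 < n) (hC : (⟨n-1, by omega⟩ : Fin n) ∈ C) :
    (peak (uni C) hn0).val = C.card - 1 := by
  have h2 : peak (uni C) hn0
      = ⟨C.card - 1, by have := card_le_n C; have := card_pos_of_top C hn0 hC; omega⟩ := by
    rw [peak, Equiv.symm_apply_eq]
    exact (uni_peak_apply C hn0 hC).symm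
  rw [h2]

lemma uni_mono (C : Finset (Fin n)) (i j : Fin n) (hij : i < j) (hj : j.val < C.card) :
    uni C i < uni C j := by
  rw [uni_apply_lt C i (lt_trans hij hj), uni_apply_lt C j hj]
  exact (C.orderEmbOfFin rfl).strictMono (by rw [Fin.mk_lt_mk]; exact hij)

lemma uni_anti (C : Finset (Fin n)) (hn0 : 0 < n) (hC : (⟨n-1, by omega⟩ : Fin n) ∈ C)
    (i j : Fin n) (hi : C.card - 1 ≤ i.val) (hij : i < j) :
    uni C j < uni C i := by
  have hpos := card_pos_of_top C hn0 hC
  have hcn := card_le_n C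
  have hjval := j.isLt
  have hijv : i.val < j.val := hij
  have hjc : ¬ j.val < C.card := by omega
  rcases Nat.lt_or_ge i.val C.card with hi2 | hi2
  · -- i is the peak
    have hieq : i = ⟨C.card - 1, by omega⟩ := Fin.ext (by omega : i.val = C.card - 1)
    rw [hieq, uni_peak_apply C hn0 hC]
    have hne : (uni C j).val ≠ n - 1 := by
      intro h
      have he : uni C j = uni C ⟨C.card - 1, by omega⟩ := by
        rw [uni_peak_apply C hn0 hC]; exact Fin.ext h
      have hj2 := congrArg Fin.val ((uni C).injective he)
      have hj3 : j.val = C.card - 1 := hj2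
      omega
    rw [Fin.lt_def]
    have h1 := (uni C j).isLt
    have h2 : ((⟨n-1, by omega⟩ : Fin n)).val = n - 1 := rfl
    omega
  · have hic : ¬ i.val < C.card := by omega
    rw [uni_apply_ge C i hic (by have := i.isLt; omega),
        uni_apply_ge C j hjc (by omega)]
    apply (Cᶜ.orderEmbOfFin (compl_card C)).strictMono
    rw [Fin.mk_lt_mk]
    have := i.isLt
    omega

lemma uni_LC (C : Finset (Fin n)) (hn0 : 0 < n) (hC : (⟨n-1, by omega⟩ : Fin n) ∈ C) :
    LC (uni C) := by
  rw [lc_iff_peak _ hn0]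
  have h2 := uni_peak C hn0 hC
  have hpos := card_pos_of_top C hn0 hC
  constructor
  · intro i j hij hjm
    apply uni_mono C i j hij
    have h3 : j.val ≤ (peak (uni C) hn0).val := hjm
    omega
  · intro i j hmi hij
    apply uni_anti C hn0 hC i j _ hij
    have h3 : (peak (uni C) hn0).val ≤ i.val := hmi
    omega


open Finset

lemma uni_shape (C : Finset (Fin n)) (hn : 2 ≤ n) (hC : (⟨n-1, by omega⟩ : Fin n) ∈ C)
    (hcond : n ≤ C.card + 1 ∨ (⟨n-2, by omega⟩ : Fin n) ∉ C) :
    Shape (uni C) (by omega) := by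
  have hn0 : 0 < n := by omega
  have hpos := card_pos_of_top C hn0 hC
  have hcn := card_le_n C
  rcases hcond with h | h
  · left
    rw [uni_peak C hn0 hC]
    omega
  · right
    have hccard : C.card < n := by
      rcases Nat.lt_or_ge C.card n with h' | h'
      · exact h'
      · exfalso
        apply h
        have : C = Finset.univ := Finset.eq_univ_of_card C
          (by rw [Fintype.card_fin]; exact le_antisymm hcn h')
        rw [this]; exact Finset.mem_univ _
    have hlt : (peak (uni C) hn0).val + 1 < n := by rw [uni_peak C hn0 hC]; omega
    refine ⟨hlt, ?_⟩
    have e : (⟨(peak (uni C) hn0).val + 1, hlt⟩ : Fin n) = ⟨C.card, hccard⟩ := by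
      apply Fin.ext
      have : (peak (uni C) hn0).val = C.card - 1 := uni_peak C hn0 hC
      have h2 : ((⟨(peak (uni C) hn0).val + 1, hlt⟩ : Fin n)).val = (peak (uni C) hn0).val + 1 :=
        rfl
      have h3 : ((⟨C.card, hccard⟩ : Fin n)).val = C.card := rfl
      rw [h2, h3]; omega
    rw [e, uni_apply_ge C _ (by exact (by omega : ¬ (C.card < C.card)))
      (by exact (by omega : n - 1 - C.card < n - C.card))]
    have hne : (Cᶜ).Nonempty := ⟨_, Finset.mem_compl.mpr h⟩
    have hpos' : 0 < Cᶜ.card := Finset.card_pos.mpr hne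
    have eidx : (⟨n - 1 - C.card, by omega⟩ : Fin (n - C.card))
        = ⟨(n - C.card) - 1, by omega⟩ := Fin.ext (by exact (by omega : n - 1 - C.card = n - C.card - 1))
    rw [eidx]
    have hl := Finset.orderEmbOfFin_last (s := Cᶜ) (compl_card C) (by omega)
    rw [hl]
    apply le_antisymm
    · apply Finset.max'_le
      intro y hy
      rw [Finset.mem_compl] at hy
      have hyne : y.val ≠ n - 1 := by
        intro hv
        exact hy (by rw [show y = (⟨n-1, by omega⟩ : Fin n) from Fin.ext hv]; exact hC)
      rw [Fin.le_def]
      have := y.isLt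
      have h2 : ((⟨n-2, by omega⟩ : Fin n)).val = n - 2 := rfl
      omega
    · exact Finset.le_max' _ _ (Finset.mem_compl.mpr h)

noncomputable def CofV (π : Equiv.Perm (Fin n)) (hn0 : 0 < n) : Finset (Fin n) :=
  Finset.filter (fun v => (π.symm v).val ≤ (peak π hn0).val) Finset.univ

lemma mem_CofV {π : Equiv.Perm (Fin n)} {hn0 : 0 < n} {v : Fin n} :
    v ∈ CofV π hn0 ↔ (π.symm v).val ≤ (peak π hn0).val := by
  simp [CofV]

lemma top_mem_CofV (π : Equiv.Perm (Fin n)) (hn0 : 0 < n) :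
    (⟨n-1, by omega⟩ : Fin n) ∈ CofV π hn0 := by
  rw [mem_CofV]
  have : π.symm ⟨n-1, by omega⟩ = peak π hn0 := rfl
  rw [this]

lemma CofV_card (π : Equiv.Perm (Fin n)) (hn0 : 0 < n) :
    (CofV π hn0).card = (peak π hn0).val + 1 := by
  have himg : CofV π hn0 = (Finset.Iic (peak π hn0)).image π := by
    ext v
    rw [mem_CofV, Finset.mem_image]
    constructor
    · intro h
      exact ⟨π.symm v, by rw [Finset.mem_Iic]; exact h, π.apply_symm_apply v⟩
    · rintro ⟨i, hi, rfl⟩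
      rw [Finset.mem_Iic] at hi
      rw [Equiv.symm_apply_apply]
      exact hi
  rw [himg, Finset.card_image_of_injective _ π.injective, Fin.card_Iic]

lemma CofV_cond (π : Equiv.Perm (Fin n)) (hn0 : 0 < n) (hS : Shape π hn0) :
    n ≤ (CofV π hn0).card + 1 ∨ (⟨n-2, by omega⟩ : Fin n) ∉ CofV π hn0 := by
  rcases hS with h | ⟨hlt, hsh⟩
  · left; rw [CofV_card]; omega
  · right
    rw [mem_CofV]
    have he : π.symm ⟨n-2, by omega⟩ = ⟨(peak π hn0).val + 1, hlt⟩ := by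
      rw [← hsh]; exact Equiv.symm_apply_apply _ _
    rw [he]
    have h2 : ((⟨(peak π hn0).val + 1, hlt⟩ : Fin n)).val = (peak π hn0).val + 1 := rfl
    omega

lemma uni_CofV (π : Equiv.Perm (Fin n)) (hn0 : 0 < n) (hLC : LC π) :
    uni (CofV π hn0) = π := by
  obtain ⟨hM, hA⟩ := (lc_iff_peak π hn0).mp hLC
  have hcard := CofV_card π hn0
  have hmn := (peak π hn0).isLt
  apply Equiv.ext
  intro i
  by_cases h : i.val < (CofV π hn0).card
  · rw [uni_apply_lt _ _ h]
    have hmono : StrictMono (fun r : Fin ((CofV π hn0).card) =>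
        π ⟨r.val, by have := r.isLt; omega⟩) := by
      intro r s hrs
      apply hM
      · rw [Fin.mk_lt_mk]; exact hrs
      · rw [Fin.le_def]
        have := s.isLt
        have h2 : ((⟨s.val, by omega⟩ : Fin n)).val = s.val := rfl
        omega
    have hfs : ∀ r : Fin ((CofV π hn0).card),
        (fun r : Fin ((CofV π hn0).card) => π ⟨r.val, by have := r.isLt; omega⟩) r
          ∈ CofV π hn0 := by
      intro r
      rw [mem_CofV, Equiv.symm_apply_apply]
      have := r.isLt
      have h2 : ((⟨r.val, by omega⟩ : Fin n)).val = r.val := rfl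
      omega
    have huniq := Finset.orderEmbOfFin_unique (f := fun r : Fin ((CofV π hn0).card) =>
        π ⟨r.val, by have := r.isLt; omega⟩) rfl hfs hmono
    have := congrFun huniq ⟨i.val, h⟩
    rw [← this]
  · have hb : n - 1 - i.val < n - (CofV π hn0).card := by
      have := i.isLt; omega
    rw [uni_apply_ge _ _ h hb]
    have hmono : StrictMono (fun r : Fin (n - (CofV π hn0).card) =>
        π ⟨n - 1 - r.val, by omega⟩) := by
      intro r s hrs
      have hrv := r.isLt
      have hsv := s.isLt
      apply hA
      · rw [Fin.le_def]
        have h2 : ((⟨n - 1 - s.val, by omega⟩ : Fin n)).val = n - 1 - s.val := rfl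
        omega
      · rw [Fin.mk_lt_mk]
        have : r.val < s.val := hrs
        omega
    have hfs : ∀ r : Fin (n - (CofV π hn0).card),
        (fun r : Fin (n - (CofV π hn0).card) => π ⟨n - 1 - r.val, by omega⟩) r
          ∈ (CofV π hn0)ᶜ := by
      intro r
      rw [Finset.mem_compl, mem_CofV, Equiv.symm_apply_apply]
      have := r.isLt
      have h2 : ((⟨n - 1 - r.val, by omega⟩ : Fin n)).val = n - 1 - r.val := rfl
      omega
    have huniq := Finset.orderEmbOfFin_unique (f := fun r : Fin (n - (CofV π hn0).card) =>
        π ⟨n - 1 - r.val, by omega⟩) (compl_card (CofV π hn0)) hfs hmono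
    have := congrFun huniq ⟨n - 1 - i.val, hb⟩
    rw [← this]
    apply congrArg
    apply Fin.ext
    have := i.isLt
    have h2 : ((⟨n - 1 - (n - 1 - i.val), by omega⟩ : Fin n)).val = n - 1 - (n - 1 - i.val) := rfl
    rw [h2]
    omega

lemma CofV_uni (C : Finset (Fin n)) (hn0 : 0 < n) (hC : (⟨n-1, by omega⟩ : Fin n) ∈ C) :
    CofV (uni C) hn0 = C := by
  have hpos := card_pos_of_top C hn0 hC
  have hcn := card_le_n C
  ext v
  rw [mem_CofV, uni_peak C hn0 hC]
  constructor
  · intro h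
    have hlt : ((uni C).symm v).val < C.card := by omega
    have happ : uni C ((uni C).symm v) = v := Equiv.apply_symm_apply _ _
    rw [uni_apply_lt _ _ hlt] at happ
    rw [← happ]
    exact Finset.orderEmbOfFin_mem _ _ _
  · intro hv
    have hr : v ∈ Set.range (C.orderEmbOfFin rfl) := by
      rw [Finset.range_orderEmbOfFin]
      exact hv
    obtain ⟨r, hr⟩ := hr
    have hrn : r.val < n := by have := r.isLt; omega
    have happ : uni C ⟨r.val, hrn⟩ = v := by
      rw [uni_apply_lt _ _ (show (⟨r.val, hrn⟩ : Fin n).val < C.card from r.isLt)]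
      rw [← hr]
    have hsymm : (uni C).symm v = ⟨r.val, hrn⟩ := by
      rw [← happ]; exact Equiv.symm_apply_apply _ _
    rw [hsymm]
    have h2 : ((⟨r.val, hrn⟩ : Fin n)).val = r.val := rfl
    rw [h2]
    have := r.isLt
    omega


open Finset

lemma consec_shape (π : Equiv.Perm (Fin n)) (hn0 : 0 < n) (hLC : LC π) :
    AvoidsConsecPat (π^2) p213 ↔ Shape π hn0 := by
  constructor
  · intro h
    by_contra hs
    exact h (occ_of_not_shape hn0 hLC hs)
  · intro hs hC
    rw [consec_iff] at hC
    obtain ⟨i, h3, hA, hB⟩ := hC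
    have pow2 : ∀ x : Fin n, (π^2) x = π (π x) := fun x => by
      rw [sq]; exact Equiv.Perm.mul_apply π π x
    rw [pow2, pow2] at hA hB
    exact no_occ_of_shape hn0 hLC hs h3 (by omega) (by omega) (by omega) hA hB

noncomputable def goodEquiv (hn : 2 ≤ n) :
    {π : Equiv.Perm (Fin n) // AvoidsPat π p213 ∧ AvoidsPat π p312 ∧
        AvoidsConsecPat (π ^ 2) p213}
      ≃ {C : Finset (Fin n) // (⟨n-1, by omega⟩ : Fin n) ∈ C ∧
          (n ≤ C.card + 1 ∨ (⟨n-2, by omega⟩ : Fin n) ∉ C)} where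
  toFun := fun x => ⟨CofV x.val (by omega),
    top_mem_CofV x.val (by omega),
    CofV_cond x.val (by omega) ((consec_shape x.val (by omega)
      ((avoids_iff_LC x.val).mp ⟨x.prop.1, x.prop.2.1⟩)).mp x.prop.2.2)⟩
  invFun := fun y => ⟨uni y.val, by
    have hLC := uni_LC y.val (by omega) y.prop.1
    have h12 := (avoids_iff_LC (uni y.val)).mpr hLC
    exact ⟨h12.1, h12.2, (consec_shape _ (by omega) hLC).mpr
      (uni_shape y.val hn y.prop.1 y.prop.2)⟩⟩
  left_inv := fun x => Subtype.ext
    (uni_CofV x.val (by omega) ((avoids_iff_LC x.val).mp ⟨x.prop.1, x.prop.2.1⟩))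
  right_inv := fun y => Subtype.ext (CofV_uni y.val (by omega) y.prop.1)

lemma count_finsets (hn : 2 ≤ n) :
    Nat.card {C : Finset (Fin n) // (⟨n-1, by omega⟩ : Fin n) ∈ C ∧
        (n ≤ C.card + 1 ∨ (⟨n-2, by omega⟩ : Fin n) ∉ C)} = 2^(n-2) + n - 1 := by
  have hn1 : n - 1 < n := by omega
  have hn2 : n - 2 < n := by omega
  have hne : (⟨n-1, hn1⟩ : Fin n) ≠ (⟨n-2, hn2⟩ : Fin n) := by
    intro h
    have := congrArg Fin.val h
    simp at this; omega
  rw [Nat.card_eq_fintype_card, Fintype.card_subtype]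
  set T1 : Finset (Finset (Fin n)) := Finset.univ.filter
    (fun C => (⟨n-1, hn1⟩ : Fin n) ∈ C ∧ (⟨n-2, hn2⟩ : Fin n) ∉ C) with hT1
  set T2 : Finset (Finset (Fin n)) := Finset.univ.filter
    (fun C => (⟨n-1, hn1⟩ : Fin n) ∈ C ∧ (⟨n-2, hn2⟩ : Fin n) ∈ C ∧ n ≤ C.card + 1) with hT2
  have hsplit : Finset.univ.filter
      (fun C : Finset (Fin n) => (⟨n-1, by omega⟩ : Fin n) ∈ C ∧
        (n ≤ C.card + 1 ∨ (⟨n-2, by omega⟩ : Fin n) ∉ C)) = T1 ∪ T2 := by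
    ext C
    rw [hT1, hT2, Finset.mem_union, Finset.mem_filter, Finset.mem_filter, Finset.mem_filter]
    by_cases h : (⟨n-2, hn2⟩ : Fin n) ∈ C <;> simp [h] <;> tauto
  rw [hsplit, Finset.card_union_of_disjoint]
  swap
  · rw [Finset.disjoint_left]
    intro C hC1 hC2
    rw [hT1, Finset.mem_filter] at hC1
    rw [hT2, Finset.mem_filter] at hC2
    exact hC1.2.2 hC2.2.2.1
  -- card T1 = 2^(n-2)
  have hS0card : ((Finset.univ.erase (⟨n-1, hn1⟩ : Fin n)).erase (⟨n-2, hn2⟩ : Fin n)).card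
      = n - 2 := by
    rw [Finset.card_erase_of_mem (by
      rw [Finset.mem_erase]; exact ⟨hne.symm, Finset.mem_univ _⟩),
      Finset.card_erase_of_mem (Finset.mem_univ _)]
    simp only [Finset.card_univ, Fintype.card_fin]
    omega
  have hc1 : T1.card = 2^(n-2) := by
    have hb : T1.card
        = ((Finset.univ.erase (⟨n-1, hn1⟩ : Fin n)).erase (⟨n-2, hn2⟩ : Fin n)).powerset.card := by
      apply Finset.card_nbij' (fun C => C.erase ⟨n-1, hn1⟩)
        (fun D => insert (⟨n-1, hn1⟩ : Fin n) D)
      · intro C hC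
        rw [Finset.mem_coe, hT1, Finset.mem_filter] at hC
        rw [Finset.mem_coe, Finset.mem_powerset]
        intro x hx
        rw [Finset.mem_erase] at hx
        rw [Finset.mem_erase, Finset.mem_erase]
        refine ⟨fun hxx => hC.2.2 (hxx ▸ hx.2), hx.1, Finset.mem_univ _⟩
      · intro D hD
        rw [Finset.mem_coe, Finset.mem_powerset] at hD
        rw [Finset.mem_coe, hT1, Finset.mem_filter]
        refine ⟨Finset.mem_univ _, Finset.mem_insert_self _ _, fun hx => ?_⟩
        rcases Finset.mem_insert.mp hx with h | h
        · exact hne h.symm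
        · have := hD h
          rw [Finset.mem_erase] at this
          exact this.1 rfl
      · intro C hC
        rw [Finset.mem_coe, hT1, Finset.mem_filter] at hC
        exact Finset.insert_erase hC.2.1
      · intro D hD
        rw [Finset.mem_coe, Finset.mem_powerset] at hD
        apply Finset.erase_insert
        intro h
        have := hD h
        rw [Finset.mem_erase, Finset.mem_erase] at this
        exact this.2.1 rfl
    rw [hb, Finset.card_powerset, hS0card]
  -- card T2 = n - 1
  have hc2 : T2.card = n - 1 := by
    have hT2eq : T2 = insert Finset.univ
        (((Finset.univ.erase (⟨n-1, hn1⟩ : Fin n)).erase (⟨n-2, hn2⟩ : Fin n)).image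
          (fun x => Finset.univ.erase x)) := by
      ext C
      rw [hT2, Finset.mem_filter, Finset.mem_insert, Finset.mem_image]
      constructor
      · rintro ⟨-, h1, h2, h3⟩
        have hcle : C.card ≤ n := card_le_n C
        rcases Nat.lt_or_ge C.card n with hlt | hge
        · right
          have hcc : Cᶜ.card = 1 := by rw [compl_card]; omega
          obtain ⟨x, hx⟩ := Finset.card_eq_one.mp hcc
          refine ⟨x, ?_, ?_⟩
          · have hxC : x ∉ C := by
              have : x ∈ Cᶜ := hx ▸ Finset.mem_singleton_self x
              exact Finset.mem_compl.mp this
            rw [Finset.mem_erase, Finset.mem_erase]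
            exact ⟨fun hh => hxC (hh ▸ h2), fun hh => hxC (hh ▸ h1), Finset.mem_univ _⟩
          · ext y
            rw [Finset.mem_erase]
            constructor
            · rintro ⟨hy, -⟩
              by_contra hyC
              have : y ∈ Cᶜ := Finset.mem_compl.mpr hyC
              rw [hx, Finset.mem_singleton] at this
              exact hy this
            · intro hy
              refine ⟨fun hh => ?_, Finset.mem_univ _⟩
              have hyn : y ∉ C := by
                have : y ∈ Cᶜ := hh ▸ (hx ▸ Finset.mem_singleton_self x)
                exact Finset.mem_compl.mp this
              exact hyn hy
        · left
          exact Finset.eq_univ_of_card C (by rw [Fintype.card_fin]; exact le_antisymm hcle hge)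
      · intro h
        rcases h with rfl | ⟨x, hx, rfl⟩
        · refine ⟨Finset.mem_univ _, Finset.mem_univ _, Finset.mem_univ _, ?_⟩
          have : (Finset.univ : Finset (Fin n)).card = n := by simp
          omega
        · rw [Finset.mem_erase, Finset.mem_erase] at hx
          refine ⟨Finset.mem_univ _, ?_, ?_, ?_⟩
          · rw [Finset.mem_erase]; exact ⟨fun hh => hx.2.1 hh.symm, Finset.mem_univ _⟩
          · rw [Finset.mem_erase]; exact ⟨fun hh => hx.1 hh.symm, Finset.mem_univ _⟩
          · rw [Finset.card_erase_of_mem (Finset.mem_univ _)]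
            have : (Finset.univ : Finset (Fin n)).card = n := by simp
            omega
    rw [hT2eq, Finset.card_insert_of_notMem, Finset.card_image_of_injOn, hS0card]
    · omega
    · intro x _ y _ hxy
      by_contra hne2
      have hxy' : Finset.univ.erase x = Finset.univ.erase y := hxy
      have hx : x ∈ Finset.univ.erase y := by
        rw [Finset.mem_erase]; exact ⟨hne2, Finset.mem_univ _⟩
      rw [← hxy', Finset.mem_erase] at hx
      exact hx.1 rfl
    · intro h
      rw [Finset.mem_image] at h
      obtain ⟨x, -, hx⟩ := h
      have h1 : (Finset.univ.erase x).card = n - 1 :=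
        (Finset.card_erase_of_mem (Finset.mem_univ _)).trans (by simp)
      rw [hx] at h1
      have h2 : (Finset.univ : Finset (Fin n)).card = n := by simp
      omega
  rw [hc1, hc2]
  omega



end Stmt1Aux

/-- For every n ≥ 2, the number of permutations π in S_n such that π avoids
213 and 312 and π² avoids the consecutive pattern 213 equals 2^{n−2} + n − 1. -/
theorem stmt1 (n : ℕ) (hn : 2 ≤ n) :
    Nat.card {π : Equiv.Perm (Fin n) //
        AvoidsPat π p213 ∧ AvoidsPat π p312 ∧ AvoidsConsecPat (π ^ 2) p213} =
      2 ^ (n - 2) + n - 1 := by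
  rw [Nat.card_congr (Stmt1Aux.goodEquiv hn)]
  exact Stmt1Aux.count_finsets hn
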